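/- Let G be a countable discrete group with a measure-preserving action on a standard Borel probability space (X, μ), and assume the conjugation–Koopman representation has spectral gap, i.e., there exist a finite set S₀ ⊆ G and κ > 0 such that every ξ ∈ L²(G × X, ν) satisfying ∫_X ξ(h, x) dμ(x) = 0 for every h ∈ G obeys max_{g∈S₀} ‖π(g)ξ − ξ‖₂ ≥ κ‖ξ‖₂. Then for every ε > 0 and every finite subset F ⊆ G there exist a finite subset S ⊆ G and δ > 0 such that for every measurable map f : X → G satisfying μ({x ∈ X : f(g·x)·g = g·f(x)}) > 1 − δ for all g ∈ S, there exists g₀ ∈ G which commutes with every element of F and satisfies μ({x ∈ X : f(x) = g₀}) > 1 − ε. -/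

import Mathlib

open Filter Topology MeasureTheory
open scoped ENNReal

lemma nnnorm_rpow_two_aux (r : ℝ) : (‖r‖₊ : ℝ≥0∞) ^ (2 : ℝ) = ENNReal.ofReal (r ^ 2) := by
  rw [← enorm_eq_nnnorm, Real.enorm_eq_ofReal_abs, ENNReal.ofReal_rpow_of_nonneg (abs_nonneg r) (by norm_num)]
  rw [show (2:ℝ) = ((2:ℕ):ℝ) by norm_num, Real.rpow_natCast, sq_abs]

lemma measurableSet_eq_fun_countable_aux {X G : Type*} [MeasurableSpace X] [MeasurableSpace G]
    [Countable G] [MeasurableSingletonClass G] {f₁ f₂ : X → G}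
    (h₁ : Measurable f₁) (h₂ : Measurable f₂) : MeasurableSet {x | f₁ x = f₂ x} := by
  have : {x | f₁ x = f₂ x} = ⋃ h : G, (f₁ ⁻¹' {h} ∩ f₂ ⁻¹' {h}) := by
    ext x
    simp only [Set.mem_setOf_eq, Set.mem_iUnion, Set.mem_inter_iff, Set.mem_preimage,
      Set.mem_singleton_iff]
    exact ⟨fun h => ⟨f₁ x, rfl, h.symm⟩, fun ⟨h, h1, h2⟩ => h1.trans h2.symm⟩
  rw [this]
  exact MeasurableSet.iUnion fun h => (h₁ (measurableSet_singleton h)).inter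
    (h₂ (measurableSet_singleton h))

/-- The natural measure on `G × X`: the product of the counting measure on the countable
discrete group `G` with the probability measure `μ` on `X`. -/
noncomputable def nuGX (G : Type*) {X : Type*} [MeasurableSpace G] [MeasurableSpace X]
    (μ : Measure X) : Measure (G × X) :=
  (Measure.count : Measure G).prod μ

lemma eLpNorm_two_eq_aux {G X : Type*} [MeasurableSpace G] [MeasurableSpace X]
    (μ : Measure X) (w : G × X → ℝ) :
    eLpNorm w 2 (nuGX G μ) = (∫⁻ z, ENNReal.ofReal (w z ^ 2) ∂(nuGX G μ)) ^ (1/2 : ℝ) := by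
  rw [eLpNorm_eq_lintegral_rpow_enorm_toReal two_ne_zero ENNReal.ofNat_ne_top]
  simp only [ENNReal.toReal_ofNat, enorm_eq_nnnorm, nnnorm_rpow_two_aux]

lemma lint_prod_eq_aux {G X : Type*} [MeasurableSpace G] [Countable G]
    [MeasurableSingletonClass G]
    [MeasurableSpace X] (μ : Measure X) [SFinite μ] {w : G × X → ℝ} (hw : Measurable w) :
    ∫⁻ z, ENNReal.ofReal (w z ^ 2) ∂(nuGX G μ)
      = ∑' h : G, ∫⁻ x, ENNReal.ofReal (w (h, x) ^ 2) ∂μ := by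
  simp only [nuGX]
  rw [MeasureTheory.lintegral_prod _ ((hw.pow_const 2).ennreal_ofReal).aemeasurable,
    lintegral_count]

lemma lint_ite_aux {X : Type*} [MeasurableSpace X] (μ : Measure X) {A : Set X}
    [DecidablePred (· ∈ A)] (hA : MeasurableSet A) (c d : ℝ) :
    ∫⁻ x, ENNReal.ofReal ((if x ∈ A then c else d) ^ 2) ∂μ
      = ENNReal.ofReal (c ^ 2) * μ A + ENNReal.ofReal (d ^ 2) * μ Aᶜ := by
  have h : (fun x => ENNReal.ofReal ((if x ∈ A then c else d) ^ 2))
      = fun x => A.indicator (fun _ => ENNReal.ofReal (c^2)) x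
          + Aᶜ.indicator (fun _ => ENNReal.ofReal (d^2)) x := by
    funext x
    by_cases hx : x ∈ A <;> simp [hx, Set.indicator_apply]
  rw [h, lintegral_add_left (measurable_const.indicator hA),
    lintegral_indicator_const hA, lintegral_indicator_const hA.compl]

set_option maxHeartbeats 1000000 in
/-- Let `G` be a countable group with a measure-preserving action on a standard Borel
probability space `(X, μ)` whose conjugation–Koopman representation
`(π(g)ξ)(h, x) = ξ(g⁻¹ h g, g⁻¹ • x)` on `L²(G × X, ν)` has spectral gap.  Then for every
`ε > 0` and finite `F ⊆ G` there are a finite `S ⊆ G` and `δ > 0` such that every measurable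
`f : X → G` (encoding the element `x ↦ (f x) • x` of the full group of the translation
groupoid) which `δ`-almost commutes with every `g ∈ S` is `ε`-close to a group element `g₀`
commuting with all of `F`. -/
theorem almost_central_full_group_element_of_spectral_gap
    {G : Type*} [Group G] [Countable G] [MeasurableSpace G] [MeasurableSingletonClass G]
    {X : Type*} [MeasurableSpace X] [StandardBorelSpace X]
    (μ : Measure X) [IsProbabilityMeasure μ] [MulAction G X]
    (hmp : ∀ g : G, MeasurePreserving (fun x : X => g • x) μ μ)
    (S₀ : Finset G) (κ : ℝ) (hκ : 0 < κ)
    (hgap : ∀ ξ : G × X → ℝ, MemLp ξ 2 (nuGX G μ) →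
      (∀ h : G, ∫ x, ξ (h, x) ∂μ = 0) →
      ∃ g ∈ S₀, ENNReal.ofReal κ * eLpNorm ξ 2 (nuGX G μ) ≤
        eLpNorm (fun p : G × X => ξ (g⁻¹ * p.1 * g, g⁻¹ • p.2) - ξ p) 2 (nuGX G μ))
    (ε : ℝ) (hε : 0 < ε) (F : Finset G) :
    ∃ (S : Finset G) (δ : ℝ), 0 < δ ∧
      ∀ f : X → G, Measurable f →
        (∀ g ∈ S, 1 - δ < (μ {x : X | f (g • x) * g = g * f x}).toReal) →
        ∃ g₀ : G, (∀ g ∈ F, g₀ * g = g * g₀) ∧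
          1 - ε < (μ {x : X | f x = g₀}).toReal := by
  classical
  set t : ℝ := min ε (1/4) with ht_def
  have ht : 0 < t := lt_min hε (by norm_num)
  have ht4 : t ≤ 1/4 := min_le_right _ _
  have htε : t ≤ ε := min_le_left _ _
  set δ : ℝ := min (κ^2 * t / 16) (1/4) with hδ_def
  have hδpos : 0 < δ := lt_min (by positivity) (by norm_num)
  have hδ4 : δ ≤ 1/4 := min_le_right _ _
  have hδκ : 8 * δ / κ^2 ≤ t / 2 := by
    have h1 : δ ≤ κ^2 * t / 16 := min_le_left _ _
    rw [div_le_div_iff₀ (by positivity) (by norm_num)]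
    nlinarith [sq_nonneg κ]
  refine ⟨S₀ ∪ F, δ, hδpos, ?_⟩
  intro f hf hcomm
  -- basic sets
  set A : G → Set X := fun h => f ⁻¹' {h} with hA_def
  have hmemA : ∀ {h : G} {x : X}, x ∈ A h ↔ f x = h := fun {h x} => Iff.rfl
  have hAmeas : ∀ h, MeasurableSet (A h) := fun h => hf (measurableSet_singleton h)
  have hAdisj : Pairwise (Function.onFun Disjoint A) := fun h h' hne =>
    Set.disjoint_left.mpr (fun x hx hx' => hne ((hmemA.mp hx).symm.trans (hmemA.mp hx')))
  have hAunion : (⋃ h, A h) = Set.univ := by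
    ext x
    simp only [Set.mem_iUnion, Set.mem_univ, iff_true]
    exact ⟨f x, hmemA.mpr rfl⟩
  have hsum1 : ∑' h, μ (A h) = 1 := by
    rw [← measure_iUnion hAdisj hAmeas, hAunion, measure_univ]
  set p : G → ℝ := fun h => (μ (A h)).toReal with hp_def
  have hp0 : ∀ h, 0 ≤ p h := fun h => ENNReal.toReal_nonneg
  have hp1 : ∀ h, p h ≤ 1 := fun h => by
    have h1 : μ (A h) ≤ 1 := prob_le_one
    have := ENNReal.toReal_mono ENNReal.one_ne_top h1
    simpa using this
  have hAp : ∀ h, μ (A h) = ENNReal.ofReal (p h) := fun h =>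
    (ENNReal.ofReal_toReal (measure_ne_top μ _)).symm
  have hAc : ∀ h, μ (A h)ᶜ = ENNReal.ofReal (1 - p h) := fun h => by
    rw [measure_compl (hAmeas h) (measure_ne_top μ _), measure_univ,
      ENNReal.ofReal_sub 1 (hp0 h), ENNReal.ofReal_one, hAp h]
  -- the centered indicator of the graph of f
  set ξ : G × X → ℝ := fun z => (if f z.2 = z.1 then (1:ℝ) else 0) - p z.1 with hξ_def
  have hξh : ∀ h : G, Measurable fun x => ξ (h, x) := fun h => by
    simp only [hξ_def]
    exact (Measurable.ite (hf (measurableSet_singleton h)) measurable_const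
      measurable_const).sub measurable_const
  have hξmeas : Measurable ξ := by
    have h1 : Measurable fun q : X × G => ξ (q.2, q.1) :=
      measurable_from_prod_countable_left (fun h => hξh h)
    exact h1.comp measurable_swap
  set T : ℝ≥0∞ := ∑' h, ENNReal.ofReal (p h * (1 - p h)) with hT_def
  have hTξ : ∫⁻ z, ENNReal.ofReal (ξ z ^ 2) ∂(nuGX G μ) = T := by
    rw [lint_prod_eq_aux μ hξmeas, hT_def]
    congr 1; funext h
    have e1 : ∀ x, ξ (h, x) = (if x ∈ A h then 1 - p h else 0 - p h) := by
      intro x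
      by_cases hx : x ∈ A h
      · have hfx : f x = h := hmemA.mp hx
        simp [hξ_def, hfx, hx]
      · have hfx : ¬ f x = h := fun hh => hx (hmemA.mpr hh)
        simp [hξ_def, hfx, hx]
    calc ∫⁻ x, ENNReal.ofReal (ξ (h, x) ^ 2) ∂μ
        = ∫⁻ x, ENNReal.ofReal ((if x ∈ A h then 1 - p h else 0 - p h) ^ 2) ∂μ := by
          simp_rw [e1]
      _ = ENNReal.ofReal ((1 - p h) ^ 2) * μ (A h)
            + ENNReal.ofReal ((0 - p h) ^ 2) * μ (A h)ᶜ := lint_ite_aux μ (hAmeas h) _ _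
      _ = ENNReal.ofReal (p h * (1 - p h)) := by
          rw [hAp h, hAc h, ← ENNReal.ofReal_mul (sq_nonneg _), ← ENNReal.ofReal_mul (sq_nonneg _),
            ← ENNReal.ofReal_add (mul_nonneg (sq_nonneg _) (hp0 h))
              (mul_nonneg (sq_nonneg _) (sub_nonneg.mpr (hp1 h)))]
          congr 1; ring
  have hTle : T ≤ 1 := by
    rw [hT_def]
    calc ∑' h, ENNReal.ofReal (p h * (1 - p h)) ≤ ∑' h, μ (A h) := by
          apply ENNReal.tsum_le_tsum; intro h
          rw [hAp h]; apply ENNReal.ofReal_le_ofReal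
          nlinarith [hp0 h, hp1 h]
      _ = 1 := hsum1
  have hmem : MemLp ξ 2 (nuGX G μ) := by
    refine ⟨hξmeas.aestronglyMeasurable, ?_⟩
    rw [eLpNorm_two_eq_aux, hTξ]
    exact ENNReal.rpow_lt_top_of_nonneg (by norm_num)
      (ne_top_of_le_ne_top ENNReal.one_ne_top hTle)
  have hcent : ∀ h : G, ∫ x, ξ (h, x) ∂μ = 0 := by
    intro h
    have hint : Integrable ((A h).indicator (fun _ => (1:ℝ))) μ :=
      (integrable_const 1).indicator (hAmeas h)
    have e2 : (fun x => ξ (h, x)) = fun x => (A h).indicator (fun _ => (1:ℝ)) x - p h := by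
      funext x
      show (if f x = h then (1:ℝ) else 0) - p h = (A h).indicator (fun _ => (1:ℝ)) x - p h
      by_cases hx : x ∈ A h
      · have hfx : f x = h := hmemA.mp hx
        rw [if_pos hfx, Set.indicator_of_mem hx]
      · have hfx : ¬ f x = h := fun hh => hx (hmemA.mpr hh)
        rw [if_neg hfx, Set.indicator_of_notMem hx]
    rw [e2, integral_sub hint (integrable_const _), integral_indicator_const _ (hAmeas h),
      integral_const]
    simp [hp_def, Measure.real]
  obtain ⟨g, hgS₀, hgap'⟩ := hgap ξ hmem hcent
  -- the conjugated function
  set ft : X → G := fun x => g * f (g⁻¹ • x) * g⁻¹ with hft_def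
  have hftmeas : Measurable ft :=
    (measurable_of_countable (fun a : G => g * a * g⁻¹)).comp (hf.comp (hmp g⁻¹).measurable)
  set At : G → Set X := fun h => ft ⁻¹' {h} with hAt_def
  have hmemAt : ∀ {h : G} {x : X}, x ∈ At h ↔ ft x = h := fun {h x} => Iff.rfl
  have hAtmeas : ∀ h, MeasurableSet (At h) := fun h => hftmeas (measurableSet_singleton h)
  have hAtdisj : Pairwise (Function.onFun Disjoint At) := fun h h' hne =>
    Set.disjoint_left.mpr (fun x hx hx' => hne ((hmemAt.mp hx).symm.trans (hmemAt.mp hx')))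
  have hAt_eq : ∀ h, At h = (fun x => g⁻¹ • x) ⁻¹' (A (g⁻¹ * h * g)) := by
    intro h; ext x
    simp only [hAt_def, hA_def, Set.mem_preimage, Set.mem_singleton_iff, hft_def]
    constructor
    · intro hh; rw [← hh]; group
    · intro hh; rw [hh]; group
  have hμAt : ∀ h, μ (At h) = μ (A (g⁻¹ * h * g)) := fun h => by
    rw [hAt_eq h]; exact (hmp g⁻¹).measure_preimage (hAmeas _).nullMeasurableSet
  have hq : ∀ h, (μ (At h)).toReal = p (g⁻¹ * h * g) := fun h => by
    rw [hμAt h]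
  -- the set where ft and f differ
  set E : Set X := {x | ft x = f x} with hE_def
  have hEmeas : MeasurableSet E := measurableSet_eq_fun_countable_aux hftmeas hf
  set D : Set X := Eᶜ with hD_def
  have hDmeas : MeasurableSet D := hEmeas.compl
  have hBgmeas : MeasurableSet {x : X | f (g • x) * g = g * f x} :=
    measurableSet_eq_fun_countable_aux
      ((measurable_of_countable (· * g)).comp (hf.comp (hmp g).measurable))
      ((measurable_of_countable (g * ·)).comp hf)
  have hE_eq : E = (fun x => g⁻¹ • x) ⁻¹' {x : X | f (g • x) * g = g * f x} := by
    ext x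
    simp only [hE_def, Set.mem_setOf_eq, Set.mem_preimage, hft_def, smul_inv_smul]
    constructor
    · intro hh; rw [← hh]; group
    · intro hh; rw [← hh]; group
  have hμE : μ E = μ {x : X | f (g • x) * g = g * f x} := by
    rw [hE_eq]; exact (hmp g⁻¹).measure_preimage hBgmeas.nullMeasurableSet
  have hμD : μ D ≤ ENNReal.ofReal δ := by
    have h1 : 1 - δ < (μ E).toReal := by
      rw [hμE]; exact hcomm g (Finset.mem_union_left _ hgS₀)
    have h2 : μ D = 1 - μ E := by
      rw [hD_def, measure_compl hEmeas (measure_ne_top μ _), measure_univ]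
    rw [h2, ← ENNReal.ofReal_toReal (a := μ E) (measure_ne_top μ _), ← ENNReal.ofReal_one,
      ← ENNReal.ofReal_sub _ ENNReal.toReal_nonneg]
    exact ENNReal.ofReal_le_ofReal (by linarith)
  -- split the gap difference into u + v
  set u : G × X → ℝ := fun z =>
    (if ft z.2 = z.1 then (1:ℝ) else 0) - (if f z.2 = z.1 then (1:ℝ) else 0) with hu_def
  set v : G × X → ℝ := fun z => p z.1 - p (g⁻¹ * z.1 * g) with hv_def
  have humeas : Measurable u := by
    have h1 : Measurable fun q : X × G => u (q.2, q.1) :=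
      measurable_from_prod_countable_left fun h =>
        (Measurable.ite (hftmeas (measurableSet_singleton h)) measurable_const
          measurable_const).sub
        (Measurable.ite (hf (measurableSet_singleton h)) measurable_const measurable_const)
    exact h1.comp measurable_swap
  have hvmeas : Measurable v :=
    (measurable_of_countable (fun h : G => p h - p (g⁻¹ * h * g))).comp measurable_fst
  have hη : (fun z : G × X => ξ (g⁻¹ * z.1 * g, g⁻¹ • z.2) - ξ z) = fun z => u z + v z := by
    funext z
    simp only [hξ_def, hu_def, hv_def]
    have hcond : (f (g⁻¹ • z.2) = g⁻¹ * z.1 * g) = (ft z.2 = z.1) := by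
      apply propext; constructor
      · intro hh; simp only [hft_def]; rw [hh]; group
      · intro hh; rw [← hh]; simp only [hft_def]; group
    rw [hcond]; ring
  -- bound for u
  have hsum_upper : ∀ (B : G → Set X), (∀ h, MeasurableSet (B h)) →
      Pairwise (Function.onFun Disjoint B) → (∀ h, B h ⊆ D) →
      ∑' h, μ (B h) ≤ μ D := by
    intro B hBm hBd hBsub
    rw [← measure_iUnion hBd hBm]
    exact measure_mono (Set.iUnion_subset hBsub)
  have hLu : ∫⁻ z, ENNReal.ofReal (u z ^ 2) ∂(nuGX G μ) ≤ 2 * ENNReal.ofReal δ := by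
    rw [lint_prod_eq_aux μ humeas]
    have hb : ∀ h, ∫⁻ x, ENNReal.ofReal (u (h, x) ^ 2) ∂μ ≤ μ (D ∩ A h) + μ (D ∩ At h) := by
      intro h
      have hpt : ∀ x, ENNReal.ofReal (u (h, x) ^ 2) ≤
          (D ∩ A h).indicator (fun _ => (1:ℝ≥0∞)) x
            + (D ∩ At h).indicator (fun _ => (1:ℝ≥0∞)) x := by
        intro x
        show ENNReal.ofReal (((if ft x = h then (1:ℝ) else 0) - (if f x = h then (1:ℝ) else 0)) ^ 2)
          ≤ _
        by_cases h2 : ft x = h <;> by_cases h1 : f x = h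
        · rw [if_pos h1, if_pos h2]; simp
        · have hxD : x ∈ D := by
            simp only [hD_def, hE_def, Set.mem_compl_iff, Set.mem_setOf_eq]
            rw [h2]; exact fun hh => h1 hh.symm
          have hxAt : x ∈ At h := hmemAt.mpr h2
          have hI : (D ∩ At h).indicator (fun _ => (1:ℝ≥0∞)) x = 1 :=
            Set.indicator_of_mem (show x ∈ D ∩ At h from ⟨hxD, hxAt⟩) (fun _ => (1:ℝ≥0∞))
          rw [if_pos h2, if_neg h1, hI]
          calc ENNReal.ofReal (((1:ℝ) - 0) ^ 2) = 1 := by norm_num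
            _ ≤ _ := le_add_self
        · have hxD : x ∈ D := by
            simp only [hD_def, hE_def, Set.mem_compl_iff, Set.mem_setOf_eq]
            rw [h1]; exact h2
          have hxA : x ∈ A h := hmemA.mpr h1
          have hI : (D ∩ A h).indicator (fun _ => (1:ℝ≥0∞)) x = 1 :=
            Set.indicator_of_mem (show x ∈ D ∩ A h from ⟨hxD, hxA⟩) (fun _ => (1:ℝ≥0∞))
          rw [if_neg h2, if_pos h1, hI]
          calc ENNReal.ofReal (((0:ℝ) - 1) ^ 2) = 1 := by norm_num
            _ ≤ _ := le_add_right le_rfl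
        · rw [if_neg h1, if_neg h2]; simp
      calc ∫⁻ x, ENNReal.ofReal (u (h, x) ^ 2) ∂μ
          ≤ ∫⁻ x, ((D ∩ A h).indicator (fun _ => (1:ℝ≥0∞)) x
              + (D ∩ At h).indicator (fun _ => (1:ℝ≥0∞)) x) ∂μ := lintegral_mono hpt
        _ = μ (D ∩ A h) + μ (D ∩ At h) := by
            rw [lintegral_add_left (measurable_const.indicator (hDmeas.inter (hAmeas h))),
              lintegral_indicator_const (hDmeas.inter (hAmeas h)),
              lintegral_indicator_const (hDmeas.inter (hAtmeas h)), one_mul, one_mul]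
    calc ∑' h, ∫⁻ x, ENNReal.ofReal (u (h, x) ^ 2) ∂μ
        ≤ ∑' h, (μ (D ∩ A h) + μ (D ∩ At h)) := ENNReal.tsum_le_tsum hb
      _ = (∑' h, μ (D ∩ A h)) + ∑' h, μ (D ∩ At h) := ENNReal.tsum_add
      _ ≤ μ D + μ D := by
          apply add_le_add
          · exact hsum_upper _ (fun h => hDmeas.inter (hAmeas h))
              (fun a b hab => ((hAdisj hab).mono Set.inter_subset_right Set.inter_subset_right))
              (fun h => Set.inter_subset_left)
          · exact hsum_upper _ (fun h => hDmeas.inter (hAtmeas h))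
              (fun a b hab => ((hAtdisj hab).mono Set.inter_subset_right Set.inter_subset_right))
              (fun h => Set.inter_subset_left)
      _ = 2 * μ D := (two_mul _).symm
      _ ≤ 2 * ENNReal.ofReal δ := mul_le_mul_right hμD 2
  -- bound for v
  have hLv : ∫⁻ z, ENNReal.ofReal (v z ^ 2) ∂(nuGX G μ) ≤ 2 * ENNReal.ofReal δ := by
    rw [lint_prod_eq_aux μ hvmeas]
    have hb : ∀ h, ∫⁻ x, ENNReal.ofReal (v (h, x) ^ 2) ∂μ ≤ μ (D ∩ A h) + μ (D ∩ At h) := by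
      intro h
      have : ∫⁻ x, ENNReal.ofReal (v (h, x) ^ 2) ∂μ
          = ENNReal.ofReal ((p h - p (g⁻¹ * h * g)) ^ 2) := by
        rw [show (fun x : X => ENNReal.ofReal (v (h, x) ^ 2))
            = fun _ : X => ENNReal.ofReal ((p h - p (g⁻¹ * h * g)) ^ 2) from rfl,
          lintegral_const, measure_univ, mul_one]
      rw [this]
      have hsub1 : A h \ At h ⊆ D ∩ A h := by
        intro x hx
        refine ⟨?_, hx.1⟩
        simp only [hD_def, hE_def, Set.mem_compl_iff, Set.mem_setOf_eq]
        intro hfe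
        exact hx.2 (hmemAt.mpr (hfe.trans (hmemA.mp hx.1)))
      have hsub2 : At h \ A h ⊆ D ∩ At h := by
        intro x hx
        refine ⟨?_, hx.1⟩
        simp only [hD_def, hE_def, Set.mem_compl_iff, Set.mem_setOf_eq]
        intro hfe
        exact hx.2 (hmemA.mpr (hfe.symm.trans (hmemAt.mp hx.1)))
      have hple : p h ≤ (μ (At h)).toReal + (μ (D ∩ A h)).toReal := by
        have hss : A h ⊆ At h ∪ (A h \ At h) := fun x hx => by
          by_cases hxt : x ∈ At h
          · exact Or.inl hxt
          · exact Or.inr ⟨hx, hxt⟩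
        have h1 : μ (A h) ≤ μ (At h) + μ (D ∩ A h) :=
          le_trans (le_trans (measure_mono hss) (measure_union_le _ _))
            (add_le_add_right (measure_mono hsub1) _)
        calc p h = (μ (A h)).toReal := rfl
          _ ≤ ((μ (At h)) + μ (D ∩ A h)).toReal := ENNReal.toReal_mono
              (ENNReal.add_ne_top.mpr ⟨measure_ne_top _ _, measure_ne_top _ _⟩) h1
          _ = _ := ENNReal.toReal_add (measure_ne_top _ _) (measure_ne_top _ _)
      have hqle : (μ (At h)).toReal ≤ p h + (μ (D ∩ At h)).toReal := by
        have hss : At h ⊆ A h ∪ (At h \ A h) := fun x hx => by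
          by_cases hxt : x ∈ A h
          · exact Or.inl hxt
          · exact Or.inr ⟨hx, hxt⟩
        have h1 : μ (At h) ≤ μ (A h) + μ (D ∩ At h) :=
          le_trans (le_trans (measure_mono hss) (measure_union_le _ _))
            (add_le_add_right (measure_mono hsub2) _)
        calc (μ (At h)).toReal
            ≤ ((μ (A h)) + μ (D ∩ At h)).toReal := ENNReal.toReal_mono
              (ENNReal.add_ne_top.mpr ⟨measure_ne_top _ _, measure_ne_top _ _⟩) h1
          _ = _ := ENNReal.toReal_add (measure_ne_top _ _) (measure_ne_top _ _)
      have habs : |p h - p (g⁻¹ * h * g)| ≤ (μ (D ∩ A h)).toReal + (μ (D ∩ At h)).toReal := by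
        rw [← hq h, abs_sub_le_iff]
        constructor <;> [skip; skip] <;>
          [linarith [hple, ENNReal.toReal_nonneg (a := μ (D ∩ At h))];
           linarith [hqle, ENNReal.toReal_nonneg (a := μ (D ∩ A h))]]
      have habs1 : |p h - p (g⁻¹ * h * g)| ≤ 1 := by
        rw [abs_sub_le_iff]
        constructor <;> nlinarith [hp0 h, hp1 h, hp0 (g⁻¹ * h * g), hp1 (g⁻¹ * h * g)]
      have hsq : (p h - p (g⁻¹ * h * g)) ^ 2
          ≤ (μ (D ∩ A h)).toReal + (μ (D ∩ At h)).toReal := by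
        nlinarith [abs_nonneg (p h - p (g⁻¹ * h * g)), sq_abs (p h - p (g⁻¹ * h * g))]
      calc ENNReal.ofReal ((p h - p (g⁻¹ * h * g)) ^ 2)
          ≤ ENNReal.ofReal ((μ (D ∩ A h)).toReal + (μ (D ∩ At h)).toReal) :=
            ENNReal.ofReal_le_ofReal hsq
        _ = μ (D ∩ A h) + μ (D ∩ At h) := by
            rw [ENNReal.ofReal_add ENNReal.toReal_nonneg ENNReal.toReal_nonneg,
              ENNReal.ofReal_toReal (measure_ne_top _ _),
              ENNReal.ofReal_toReal (measure_ne_top _ _)]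
    calc ∑' h, ∫⁻ x, ENNReal.ofReal (v (h, x) ^ 2) ∂μ
        ≤ ∑' h, (μ (D ∩ A h) + μ (D ∩ At h)) := ENNReal.tsum_le_tsum hb
      _ = (∑' h, μ (D ∩ A h)) + ∑' h, μ (D ∩ At h) := ENNReal.tsum_add
      _ ≤ μ D + μ D := by
          apply add_le_add
          · exact hsum_upper _ (fun h => hDmeas.inter (hAmeas h))
              (fun a b hab => ((hAdisj hab).mono Set.inter_subset_right Set.inter_subset_right))
              (fun h => Set.inter_subset_left)
          · exact hsum_upper _ (fun h => hDmeas.inter (hAtmeas h))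
              (fun a b hab => ((hAtdisj hab).mono Set.inter_subset_right Set.inter_subset_right))
              (fun h => Set.inter_subset_left)
      _ = 2 * μ D := (two_mul _).symm
      _ ≤ 2 * ENNReal.ofReal δ := mul_le_mul_right hμD 2
  -- triangle inequality
  have htri : eLpNorm (fun z : G × X => ξ (g⁻¹ * z.1 * g, g⁻¹ • z.2) - ξ z) 2 (nuGX G μ)
      ≤ 2 * (2 * ENNReal.ofReal δ) ^ (1/2 : ℝ) := by
    rw [hη]
    calc eLpNorm (fun z => u z + v z) 2 (nuGX G μ)
        ≤ eLpNorm u 2 (nuGX G μ) + eLpNorm v 2 (nuGX G μ) :=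
          eLpNorm_add_le humeas.aestronglyMeasurable hvmeas.aestronglyMeasurable one_le_two
      _ ≤ (2 * ENNReal.ofReal δ) ^ (1/2 : ℝ) + (2 * ENNReal.ofReal δ) ^ (1/2 : ℝ) := by
          apply add_le_add
          · rw [eLpNorm_two_eq_aux]
            exact ENNReal.rpow_le_rpow hLu (by norm_num)
          · rw [eLpNorm_two_eq_aux]
            exact ENNReal.rpow_le_rpow hLv (by norm_num)
      _ = 2 * (2 * ENNReal.ofReal δ) ^ (1/2 : ℝ) := (two_mul _).symm
  -- square the gap inequality
  have hTlt : T < ENNReal.ofReal t := by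
    have h1 : ENNReal.ofReal κ * T ^ (1/2 : ℝ) ≤ 2 * (2 * ENNReal.ofReal δ) ^ (1/2 : ℝ) := by
      have h0 := hgap'.trans htri
      rwa [eLpNorm_two_eq_aux, hTξ] at h0
    have h2 := ENNReal.rpow_le_rpow h1 (le_of_lt two_pos : (0:ℝ) ≤ 2)
    rw [ENNReal.mul_rpow_of_nonneg _ _ (by norm_num), ENNReal.mul_rpow_of_nonneg _ _ (by norm_num),
      ← ENNReal.rpow_mul T, ← ENNReal.rpow_mul (2 * ENNReal.ofReal δ),
      show (1/2:ℝ) * 2 = 1 by norm_num, ENNReal.rpow_one, ENNReal.rpow_one] at h2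
    -- h2 : ofReal κ ^ (2:ℝ) * T ≤ 2 ^ (2:ℝ) * (2 * ofReal δ)
    have hκ2 : ENNReal.ofReal κ ^ (2:ℝ) = ENNReal.ofReal (κ ^ 2) := by
      rw [ENNReal.ofReal_rpow_of_nonneg hκ.le (by norm_num),
        show (2:ℝ) = ((2:ℕ):ℝ) by norm_num, Real.rpow_natCast]
    have h4 : (2:ℝ≥0∞) ^ (2:ℝ) * (2 * ENNReal.ofReal δ) = ENNReal.ofReal (8 * δ) := by
      rw [show ((2:ℝ≥0∞) ^ (2:ℝ)) = 4 by
          rw [show (2:ℝ) = ((2:ℕ):ℝ) by norm_num, ENNReal.rpow_natCast]; norm_num,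
        show (8:ℝ) * δ = 8 * δ from rfl, ENNReal.ofReal_mul (by norm_num : (0:ℝ) ≤ 8)]
      rw [show ENNReal.ofReal (8:ℝ) = 8 by
          rw [show (8:ℝ) = ((8:ℕ):ℝ) by norm_num, ENNReal.ofReal_natCast]; norm_num]
      ring
    rw [hκ2, h4] at h2
    have hκ2ne : ENNReal.ofReal (κ ^ 2) ≠ 0 := by
      simp only [ne_eq, ENNReal.ofReal_eq_zero, not_le]
      positivity
    have hT8 : T ≤ ENNReal.ofReal (8 * δ) / ENNReal.ofReal (κ ^ 2) :=
      (ENNReal.le_div_iff_mul_le (Or.inl hκ2ne) (Or.inl ENNReal.ofReal_ne_top)).mpr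
        (by rwa [mul_comm])
    calc T ≤ ENNReal.ofReal (8 * δ) / ENNReal.ofReal (κ ^ 2) := hT8
      _ = ENNReal.ofReal (8 * δ / κ ^ 2) := by
          rw [← ENNReal.ofReal_div_of_pos (by positivity)]
      _ < ENNReal.ofReal t := by
          rw [ENNReal.ofReal_lt_ofReal_iff ht]
          linarith
  -- extract the dominant group element
  have hex : ∃ g₀ : G, 1 - t < p g₀ := by
    by_contra hcon
    push_neg at hcon
    have hge : ENNReal.ofReal t ≤ T := by
      calc ENNReal.ofReal t = (∑' h, μ (A h)) * ENNReal.ofReal t := by rw [hsum1, one_mul]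
        _ = ∑' h, μ (A h) * ENNReal.ofReal t := (ENNReal.tsum_mul_right).symm
        _ ≤ T := by
            rw [hT_def]
            apply ENNReal.tsum_le_tsum
            intro h
            rw [hAp h, ← ENNReal.ofReal_mul (hp0 h)]
            apply ENNReal.ofReal_le_ofReal
            nlinarith [hp0 h, hcon h]
    exact absurd (lt_of_le_of_lt hge hTlt) (lt_irrefl _)
  obtain ⟨g₀, hg₀⟩ := hex
  have hpg₀ : (3:ℝ)/4 < p g₀ := by linarith
  refine ⟨g₀, ?_, ?_⟩
  · -- commutation
    intro g' hg'F
    have hg'S : g' ∈ S₀ ∪ F := Finset.mem_union_right _ hg'F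
    set B : Set X := {x : X | f (g' • x) * g' = g' * f x} with hB_def
    have hBmeas : MeasurableSet B :=
      measurableSet_eq_fun_countable_aux
        ((measurable_of_countable (· * g')).comp (hf.comp (hmp g').measurable))
        ((measurable_of_countable (g' * ·)).comp hf)
    have hBμ : 1 - δ < (μ B).toReal := hcomm g' hg'S
    set C : Set X := (fun x => g' • x) ⁻¹' (A g₀) with hC_def
    have hCmeas : MeasurableSet C := (hmp g').measurable (hAmeas g₀)
    have hCμ : μ C = μ (A g₀) := (hmp g').measure_preimage (hAmeas g₀).nullMeasurableSet
    have hne : ((A g₀ ∩ B) ∩ C).Nonempty := by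
      apply nonempty_of_measure_ne_zero (μ := μ)
      intro h0
      have hcompl : μ (((A g₀ ∩ B) ∩ C)ᶜ) = 1 := by
        rw [measure_compl (((hAmeas g₀).inter hBmeas).inter hCmeas) (measure_ne_top _ _),
          h0, measure_univ, tsub_zero]
      have hsubc : ((A g₀ ∩ B) ∩ C)ᶜ ⊆ (A g₀)ᶜ ∪ (Bᶜ ∪ Cᶜ) := by
        intro x hx
        simp only [Set.mem_compl_iff, Set.mem_inter_iff, not_and_or, Set.mem_union] at hx ⊢
        tauto
      have hle1 : (1:ℝ≥0∞) ≤ μ (A g₀)ᶜ + (μ Bᶜ + μ Cᶜ) := by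
        rw [← hcompl]
        exact le_trans (measure_mono hsubc)
          (le_trans (measure_union_le _ _) (add_le_add_right (measure_union_le _ _) _))
      have hAcr : (μ (A g₀)ᶜ).toReal = 1 - p g₀ := by
        rw [measure_compl (hAmeas g₀) (measure_ne_top _ _), measure_univ,
          ENNReal.toReal_sub_of_le prob_le_one ENNReal.one_ne_top, ENNReal.toReal_one]
      have hBcr : (μ Bᶜ).toReal = 1 - (μ B).toReal := by
        rw [measure_compl hBmeas (measure_ne_top _ _), measure_univ,
          ENNReal.toReal_sub_of_le prob_le_one ENNReal.one_ne_top, ENNReal.toReal_one]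
      have hCcr : (μ Cᶜ).toReal = 1 - p g₀ := by
        rw [measure_compl hCmeas (measure_ne_top _ _), measure_univ,
          ENNReal.toReal_sub_of_le prob_le_one ENNReal.one_ne_top, ENNReal.toReal_one, hCμ]
      have hfin : μ (A g₀)ᶜ + (μ Bᶜ + μ Cᶜ) ≠ ⊤ :=
        ENNReal.add_ne_top.mpr ⟨measure_ne_top _ _,
          ENNReal.add_ne_top.mpr ⟨measure_ne_top _ _, measure_ne_top _ _⟩⟩
      have hler : (1:ℝ) ≤ (μ (A g₀)ᶜ).toReal + ((μ Bᶜ).toReal + (μ Cᶜ).toReal) := by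
        have h5 := ENNReal.toReal_mono hfin hle1
        rwa [ENNReal.toReal_one, ENNReal.toReal_add (measure_ne_top _ _)
            (ENNReal.add_ne_top.mpr ⟨measure_ne_top _ _, measure_ne_top _ _⟩),
          ENNReal.toReal_add (measure_ne_top _ _) (measure_ne_top _ _)] at h5
      rw [hAcr, hBcr, hCcr] at hler
      linarith
    obtain ⟨x, ⟨hxA, hxB⟩, hxC⟩ := hne
    have h1 : f x = g₀ := hmemA.mp hxA
    have h2 : f (g' • x) = g₀ := hmemA.mp hxC
    have h3 : f (g' • x) * g' = g' * f x := hxB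
    rw [h1, h2] at h3
    exact h3
  · -- the measure estimate
    have : {x : X | f x = g₀} = A g₀ := rfl
    rw [this]
    exact lt_of_le_of_lt (by linarith : 1 - ε ≤ 1 - t) hg₀
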